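/- Let E be a Banach space and let {E_n} be a decreasing sequence of infinite-dimensional closed subspaces of E such that for each n ∈ ℕ the space E_n contains no n-subsymmetric sequence. Let {x_n} be a basic sequence with x_n ∈ E_n for each n ∈ ℕ, and let Ẽ be the closed linear span of {x_n}. Then Ẽ contains no subsymmetric sequence. -/

import Mathlib

open Filter Topology

/-- Two sequences of vectors are `c`-equivalent: the natural map between their spans
distorts norms of finite linear combinations by at most a factor `c`. -/
def SeqEquiv {E F : Type*} [NormedAddCommGroup E] [NormedSpace ℝ E]
    [NormedAddCommGroup F] [NormedSpace ℝ F]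
    (c : ℝ) (x : ℕ → E) (y : ℕ → F) : Prop :=
  ∀ (s : Finset ℕ) (a : ℕ → ℝ),
    (1 / c) * ‖∑ i ∈ s, a i • x i‖ ≤ ‖∑ i ∈ s, a i • y i‖ ∧
    ‖∑ i ∈ s, a i • y i‖ ≤ c * ‖∑ i ∈ s, a i • x i‖

/-- A basic sequence: nonzero vectors whose partial-sum projections are uniformly bounded,
i.e. a Schauder basis of its closed linear span. -/
def IsBasicSeq {E : Type*} [NormedAddCommGroup E] [NormedSpace ℝ E] (x : ℕ → E) : Prop :=
  (∀ n, x n ≠ 0) ∧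
  ∃ K : ℝ, 1 ≤ K ∧ ∀ (a : ℕ → ℝ) (m n : ℕ), m ≤ n →
    ‖∑ i ∈ Finset.range m, a i • x i‖ ≤ K * ‖∑ i ∈ Finset.range n, a i • x i‖

/-- An unconditional basic sequence. -/
def IsUnconditionalSeq {E : Type*} [NormedAddCommGroup E] [NormedSpace ℝ E]
    (x : ℕ → E) : Prop :=
  IsBasicSeq x ∧
  ∃ K : ℝ, 0 < K ∧ ∀ (s : Finset ℕ) (a ε : ℕ → ℝ), (∀ i, ε i = 1 ∨ ε i = -1) →
    ‖∑ i ∈ s, (ε i * a i) • x i‖ ≤ K * ‖∑ i ∈ s, a i • x i‖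

/-- A `C`-subsymmetric sequence: an unconditional basic sequence that is `C`-equivalent
to each of its subsequences. -/
def IsSubsymmetric {E : Type*} [NormedAddCommGroup E] [NormedSpace ℝ E]
    (C : ℝ) (x : ℕ → E) : Prop :=
  IsUnconditionalSeq x ∧ ∀ φ : ℕ → ℕ, StrictMono φ → SeqEquiv C x (x ∘ φ)

/-- A Schauder basis of `E`: biorthogonal system whose partial sums of the expansion of
every vector converge to that vector. -/
structure SchauderBasisR (E : Type*) [NormedAddCommGroup E] [NormedSpace ℝ E] where
  e : ℕ → E
  coord : ℕ → E →L[ℝ] ℝ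
  biorth : ∀ i j, coord i (e j) = if i = j then (1 : ℝ) else 0
  expand : ∀ x : E,
    Filter.Tendsto (fun n => ∑ i ∈ Finset.range n, coord i x • e i) atTop (𝓝 x)

/-- A block sequence with respect to a Schauder basis: nonzero, finitely supported
vectors with successive supports. -/
def IsBlockSeq {E : Type*} [NormedAddCommGroup E] [NormedSpace ℝ E]
    (b : SchauderBasisR E) (x : ℕ → E) : Prop :=
  (∀ n, x n ≠ 0) ∧
  (∀ n, (Function.support fun i => b.coord i (x n)).Finite) ∧
  ∀ m n, m < n → ∀ i ∈ Function.support (fun i => b.coord i (x m)),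
    ∀ j ∈ Function.support (fun j => b.coord j (x n)), i < j

/-- A block subspace: the closed linear span of a block sequence. -/
def IsBlockSubspace {E : Type*} [NormedAddCommGroup E] [NormedSpace ℝ E]
    (b : SchauderBasisR E) (M : Submodule ℝ E) : Prop :=
  ∃ x : ℕ → E, IsBlockSeq b x ∧ M = (Submodule.span ℝ (Set.range x)).topologicalClosure

/-- An infinite-dimensional closed subspace. -/
def InfDimClosed {E : Type*} [NormedAddCommGroup E] [NormedSpace ℝ E]
    (M : Submodule ℝ E) : Prop :=
  IsClosed (M : Set E) ∧ ¬ FiniteDimensional ℝ M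

/-- The quasi-order on subspaces: `L ≤ M` iff `L ⊆ M + F` for some finite-dimensional `F`. -/
def SubspaceLE {E : Type*} [NormedAddCommGroup E] [NormedSpace ℝ E]
    (L M : Submodule ℝ E) : Prop :=
  ∃ F : Submodule ℝ E, FiniteDimensional ℝ F ∧ L ≤ M ⊔ F

/-- The equivalence relation `≐` induced by the quasi-order `SubspaceLE`. -/
def SubspaceEquiv {E : Type*} [NormedAddCommGroup E] [NormedSpace ℝ E]
    (L M : Submodule ℝ E) : Prop :=
  SubspaceLE L M ∧ SubspaceLE M L

/-- Two normed spaces are `c`-isomorphic: a linear isomorphism with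
`(1/c)‖v‖ ≤ ‖Tv‖ ≤ c‖v‖`. -/
def IsoWithConst (c : ℝ) (X Y : Type*) [NormedAddCommGroup X] [NormedSpace ℝ X]
    [NormedAddCommGroup Y] [NormedSpace ℝ Y] : Prop :=
  ∃ T : X ≃ₗ[ℝ] Y, ∀ v : X, (1 / c) * ‖v‖ ≤ ‖T v‖ ∧ ‖T v‖ ≤ c * ‖v‖

/-- A `c`-minimal Banach space: every infinite-dimensional closed subspace contains a
further infinite-dimensional closed subspace `c`-isomorphic to the whole space. -/
def CMinimalSpace (c : ℝ) (X : Type*) [NormedAddCommGroup X] [NormedSpace ℝ X] : Prop :=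
  ∀ L : Submodule ℝ X, InfDimClosed L →
    ∃ N : Submodule ℝ X, N ≤ L ∧ InfDimClosed N ∧ IsoWithConst c ↥N X

/-- A minimal Banach space: every infinite-dimensional closed subspace contains a
further infinite-dimensional closed subspace isomorphic to the whole space. -/
def MinimalSpace (X : Type*) [NormedAddCommGroup X] [NormedSpace ℝ X] : Prop :=
  ∀ L : Submodule ℝ X, InfDimClosed L →
    ∃ N : Submodule ℝ X, N ≤ L ∧ InfDimClosed N ∧ Nonempty (↥N ≃L[ℝ] X)

namespace DiagAux

/-- The set of "paired" indices `{2i, 2i+1 : i ∈ s}`. -/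
def pairF (s : Finset ℕ) : Finset ℕ := s.biUnion fun i => {2*i, 2*i+1}

/-- The "paired" coefficients: `b (2i) = a i`, `b (2i+1) = -a i`. -/
def bc (a : ℕ → ℝ) (j : ℕ) : ℝ := if j % 2 = 0 then a (j/2) else -(a (j/2))

/-- The doubling map on indices induced by `θ`. -/
def gmap (θ : ℕ → ℕ) (j : ℕ) : ℕ := 2 * θ (j/2) + j % 2

lemma bc_even (a : ℕ → ℝ) (i : ℕ) : bc a (2*i) = a i := by
  simp [bc, Nat.mul_mod_right, Nat.mul_div_cancel_left _ (two_pos)]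

lemma bc_odd (a : ℕ → ℝ) (i : ℕ) : bc a (2*i+1) = -(a i) := by
  have h1 : (2*i+1) % 2 = 1 := by omega
  have h2 : (2*i+1) / 2 = i := by omega
  simp [bc, h1, h2]

lemma gmap_even (θ : ℕ → ℕ) (i : ℕ) : gmap θ (2*i) = 2 * θ i := by
  have h1 : (2*i) % 2 = 0 := by omega
  have h2 : (2*i) / 2 = i := by omega
  simp [gmap, h1, h2]

lemma gmap_odd (θ : ℕ → ℕ) (i : ℕ) : gmap θ (2*i+1) = 2 * θ i + 1 := by
  have h1 : (2*i+1) % 2 = 1 := by omega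
  have h2 : (2*i+1) / 2 = i := by omega
  simp [gmap, h1, h2]

lemma gmap_strictMono {θ : ℕ → ℕ} (hθ : StrictMono θ) : StrictMono (gmap θ) := by
  intro j j' h
  unfold gmap
  rcases (by omega : j/2 < j'/2 ∨ (j/2 = j'/2 ∧ j % 2 < j' % 2)) with h1 | ⟨h1, h2⟩
  · have := hθ h1; omega
  · rw [h1]; omega

lemma pairF_range (m : ℕ) : pairF (Finset.range m) = Finset.range (2*m) := by
  ext j
  simp only [pairF, Finset.mem_biUnion, Finset.mem_range, Finset.mem_insert,
    Finset.mem_singleton]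
  constructor
  · rintro ⟨i, hi, rfl | rfl⟩ <;> omega
  · intro hj
    exact ⟨j/2, by omega, by omega⟩

lemma sum_pairF {E : Type*} [NormedAddCommGroup E] [NormedSpace ℝ E]
    (z : ℕ → E) (s : Finset ℕ) (a : ℕ → ℝ) :
    ∑ j ∈ pairF s, bc a j • z j = ∑ i ∈ s, a i • (z (2*i) - z (2*i+1)) := by
  unfold pairF
  rw [Finset.sum_biUnion]
  · refine Finset.sum_congr rfl fun i _ => ?_
    rw [show ({2*i, 2*i+1} : Finset ℕ) = insert (2*i) {2*i+1} from rfl,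
      Finset.sum_insert (by simp only [Finset.mem_singleton]; omega),
      Finset.sum_singleton, bc_even, bc_odd, smul_sub]
    module
  · intro i _ i' _ hne
    simp only [Finset.disjoint_left, Finset.mem_insert, Finset.mem_singleton]
    rintro j (rfl | rfl) (h | h) <;> omega

lemma bc_mul (ε a : ℕ → ℝ) (j : ℕ) : bc (fun i => ε i * a i) j = ε (j/2) * bc a j := by
  unfold bc
  split <;> ring

lemma sum_half_le {θ : ℕ → ℕ} (hθ : StrictMono θ) (s : Finset ℕ) :
    ∑ i ∈ s, ((1:ℝ)/2)^(θ i) ≤ 2 := by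
  have h1 : ∀ i ∈ s, ((1:ℝ)/2)^(θ i) ≤ (1/2)^i := fun i _ =>
    pow_le_pow_of_le_one (by norm_num) (by norm_num) (hθ.id_le i)
  calc ∑ i ∈ s, ((1:ℝ)/2)^(θ i) ≤ ∑ i ∈ s, ((1:ℝ)/2)^i := Finset.sum_le_sum h1
    _ ≤ ∑ i ∈ Finset.range (s.sup id + 1), ((1:ℝ)/2)^i := by
        refine Finset.sum_le_sum_of_subset_of_nonneg ?_ (fun i _ _ => by positivity)
        intro i hi
        exact Finset.mem_range.2 (Nat.lt_succ_of_le (Finset.le_sup (f := id) hi))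
    _ ≤ 2 := sum_geometric_two_le _

lemma exists_coord {E : Type*} [NormedAddCommGroup E] [NormedSpace ℝ E] {x : ℕ → E}
    (hb : IsBasicSeq x) :
    ∃ f : ℕ → (E →L[ℝ] ℝ), ∀ i j, f i (x j) = if i = j then (1:ℝ) else 0 := by
  obtain ⟨hne, K, hK1, hK⟩ := hb
  have hzero : ∀ (g : ℕ → ℝ) (N : ℕ), ∑ j ∈ Finset.range N, g j • x j = 0 →
      ∀ m ≤ N, ∑ j ∈ Finset.range m, g j • x j = 0 := by
    intro g N hsum m hm
    have := hK g m N hm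
    rw [hsum, norm_zero, mul_zero] at this
    exact norm_le_zero_iff.1 this
  have hli : LinearIndependent ℝ x := by
    rw [linearIndependent_iff'']
    intro s g hg hsum i
    set N := s.sup id + 1 with hN
    have hsub : s ⊆ Finset.range N := fun j hj =>
      Finset.mem_range.2 (Nat.lt_succ_of_le (Finset.le_sup (f := id) hj))
    have hsumN : ∑ j ∈ Finset.range N, g j • x j = 0 := by
      rw [← Finset.sum_subset hsub (fun j _ hj => by rw [hg j hj, zero_smul])]
      exact hsum
    by_cases hi : i < N
    · have h1 := hzero g N hsumN (i+1) hi
      have h2 := hzero g N hsumN i (le_of_lt hi)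
      rw [Finset.sum_range_succ, h2, zero_add] at h1
      rcases smul_eq_zero.1 h1 with h | h
      · exact h
      · exact absurd h (hne i)
    · exact hg i fun hmem => hi (Finset.mem_range.1 (hsub hmem))
  have key : ∀ i : ℕ, ∃ g : E →L[ℝ] ℝ, ∀ j, g (x j) = if i = j then (1:ℝ) else 0 := by
    intro i
    set p := Submodule.span ℝ (Set.range x) with hp
    have hxi : (0:ℝ) < ‖x i‖ := norm_pos_iff.2 (hne i)
    let φ₀ : p →ₗ[ℝ] ℝ := (Finsupp.lapply i).comp hli.repr
    have hbound : ∀ v : p, ‖φ₀ v‖ ≤ (2*K/‖x i‖) * ‖v‖ := by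
      intro v
      set c := hli.repr v with hc
      have hv : (Finsupp.linearCombination ℝ x) c = (v : E) := hli.linearCombination_repr v
      set N := max (c.support.sup id + 1) (i+1) with hNdef
      have hsupp : c.support ⊆ Finset.range N := fun j hj =>
        Finset.mem_range.2 (lt_of_lt_of_le (Nat.lt_succ_of_le (Finset.le_sup (f := id) hj))
          (le_max_left _ _))
      have hvN : ∑ j ∈ Finset.range N, c j • x j = (v : E) := by
        rw [← hv, Finsupp.linearCombination_apply, Finsupp.sum]
        exact (Finset.sum_subset hsupp fun j _ hj => by
          rw [Finsupp.notMem_support_iff.1 hj, zero_smul]).symm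
      have h1 : ‖∑ j ∈ Finset.range (i+1), c j • x j‖ ≤ K * ‖(v:E)‖ := by
        rw [← hvN]; exact hK c (i+1) N (le_max_right _ _)
      have h2 : ‖∑ j ∈ Finset.range i, c j • x j‖ ≤ K * ‖(v:E)‖ := by
        rw [← hvN]; exact hK c i N (le_trans (Nat.le_succ i) (le_max_right _ _))
      have h3 : c i • x i = ∑ j ∈ Finset.range (i+1), c j • x j
          - ∑ j ∈ Finset.range i, c j • x j := by
        rw [Finset.sum_range_succ]; abel
      have h4 : |c i| * ‖x i‖ ≤ 2 * K * ‖(v:E)‖ := by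
        calc |c i| * ‖x i‖ = ‖c i • x i‖ := by rw [norm_smul, Real.norm_eq_abs]
          _ ≤ ‖∑ j ∈ Finset.range (i+1), c j • x j‖ + ‖∑ j ∈ Finset.range i, c j • x j‖ := by
              rw [h3]; exact norm_sub_le _ _
          _ ≤ 2 * K * ‖(v:E)‖ := by linarith
      have hφ : φ₀ v = c i := rfl
      rw [hφ, Real.norm_eq_abs, div_mul_eq_mul_div, le_div_iff₀ hxi]
      calc |c i| * ‖x i‖ ≤ 2 * K * ‖(v:E)‖ := h4
        _ = 2 * K * ‖v‖ := rfl
    obtain ⟨g, hg, -⟩ := exists_extension_norm_eq p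
      (LinearMap.mkContinuous φ₀ (2*K/‖x i‖) hbound)
    refine ⟨g, fun j => ?_⟩
    have hmem : x j ∈ p := Submodule.subset_span (Set.mem_range_self j)
    have hgx := hg (⟨x j, hmem⟩ : p)
    have hrepr : hli.repr ⟨x j, hmem⟩ = Finsupp.single j 1 := hli.repr_eq_single j ⟨x j, hmem⟩ rfl
    have : g (x j) = φ₀ ⟨x j, hmem⟩ := hgx
    rw [this]
    simp only [φ₀, LinearMap.comp_apply, hrepr, Finsupp.lapply_apply]
    simp [Finsupp.single_apply, eq_comm]
  exact ⟨fun i => (key i).choose, fun i j => (key i).choose_spec j⟩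


end DiagAux

set_option maxHeartbeats 3200000 in
/-- If `{E_n}` is a decreasing sequence of infinite-dimensional closed
subspaces such that `E_n` contains no `n`-subsymmetric sequence, and `{x_n}` is a basic
sequence with `x_n ∈ E_n`, then the closed span of `{x_n}` contains no subsymmetric
sequence. -/
theorem diagonal_no_subsymmetric
    {E : Type*} [NormedAddCommGroup E] [NormedSpace ℝ E] [CompleteSpace E]
    (Esub : ℕ → Submodule ℝ E)
    (hinf : ∀ n, InfDimClosed (Esub n))
    (hdec : ∀ n, Esub (n + 1) ≤ Esub n)
    (hno : ∀ n : ℕ, ¬ ∃ y : ℕ → E, (∀ k, y k ∈ Esub n) ∧ IsSubsymmetric (n : ℝ) y)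
    (x : ℕ → E) (hbasic : IsBasicSeq x) (hx : ∀ n, x n ∈ Esub n) :
    ¬ ∃ (C : ℝ) (y : ℕ → E), 1 ≤ C ∧
      (∀ k, y k ∈ (Submodule.span ℝ (Set.range x)).topologicalClosure) ∧
      IsSubsymmetric C y := by
  rintro ⟨C, y, hC, hymem, ⟨⟨⟨hyne, Ky, hKy1, hKy⟩, Ku, hKu0, hKu⟩, hsub⟩⟩
  classical
  have hC0 : (0:ℝ) < C := lt_of_lt_of_le one_pos hC
  have hinv : ∀ {A B : ℝ}, (1/C) * A ≤ B → A ≤ C * B := by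
    intro A B h
    have h2 := mul_le_mul_of_nonneg_left h hC0.le
    rwa [← mul_assoc, mul_one_div_cancel (ne_of_gt hC0), one_mul] at h2
  -- `y 0 ≠ y 1`
  have hy01 : y 0 - y 1 ≠ 0 := by
    intro h
    have h2 := hKy (fun i => if i = 0 then (1:ℝ) else -1) 1 2 one_le_two
    have e1 : ∑ i ∈ Finset.range 1, (if i = 0 then (1:ℝ) else -1) • y i = y 0 := by simp
    have e2 : ∑ i ∈ Finset.range 2, (if i = 0 then (1:ℝ) else -1) • y i = y 0 - y 1 := by
      rw [Finset.sum_range_succ, Finset.sum_range_one]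
      norm_num [sub_eq_add_neg]
    rw [e1, e2, h, norm_zero, mul_zero] at h2
    exact hyne 0 (norm_le_zero_iff.1 h2)
  set δ := (1/C) * ‖y 0 - y 1‖ with hδdef
  have hδ0 : 0 < δ := mul_pos (by positivity) (norm_pos_iff.2 hy01)
  -- lower bound for pair differences along any strictly monotone map
  have hlow : ∀ ρ : ℕ → ℕ, StrictMono ρ → ∀ k, δ ≤ ‖y (ρ (2*k)) - y (ρ (2*k+1))‖ := by
    intro ρ hρ k
    have hρ' : StrictMono (fun j => ρ (2*k + j)) := fun a b h => hρ (Nat.add_lt_add_left h _)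
    have h := (hsub _ hρ' ({0, 1} : Finset ℕ) (fun i => if i = 0 then (1:ℝ) else -1)).1
    have e1 : ∑ i ∈ ({0,1} : Finset ℕ), (if i = 0 then (1:ℝ) else -1) • y i = y 0 - y 1 := by
      rw [show ({0,1} : Finset ℕ) = insert 0 {1} from rfl,
        Finset.sum_insert (by norm_num), Finset.sum_singleton]
      norm_num [sub_eq_add_neg]
    have e2 : ∑ i ∈ ({0,1} : Finset ℕ), (if i = 0 then (1:ℝ) else -1) •
        ((y ∘ fun j => ρ (2*k+j)) i) = y (ρ (2*k)) - y (ρ (2*k+1)) := by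
      rw [show ({0,1} : Finset ℕ) = insert 0 {1} from rfl,
        Finset.sum_insert (by norm_num), Finset.sum_singleton]
      norm_num [sub_eq_add_neg]
    rw [e1, e2] at h
    exact h
  have hynorm : ∀ k, ‖y k‖ ≤ C * ‖y 0‖ := by
    intro k
    have hρ : StrictMono (fun j => k + j) := fun a b h => Nat.add_lt_add_left h _
    have h := (hsub _ hρ {0} (fun _ => (1:ℝ))).2
    simpa using h
  -- coordinate functionals for the basic sequence x
  obtain ⟨f, hf⟩ := DiagAux.exists_coord hbasic
  -- the target level n
  set n : ℕ := ⌈3 * C^2⌉₊ with hndef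
  have hn3 : 3 * C^2 ≤ (n:ℝ) := Nat.le_ceil _
  have hC2 : (1:ℝ) ≤ C^2 := by nlinarith
  have hn1 : (1:ℝ) ≤ (n:ℝ) := by linarith
  have hn0 : (0:ℝ) < (n:ℝ) := by linarith
  -- the finite-rank projection P and the tail estimate
  set P : E → E := fun v => ∑ i ∈ Finset.range n, f i v • x i with hPdef
  have hanti : Antitone Esub := antitone_nat_of_succ_le hdec
  set S₂ := Submodule.span ℝ (Set.range fun j => x (n + j)) with hS₂def
  have hS2le : S₂.topologicalClosure ≤ Esub n := by
    apply Submodule.topologicalClosure_minimal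
    · rw [Submodule.span_le]
      rintro _ ⟨j, rfl⟩
      exact hanti (Nat.le_add_right n j) (hx (n + j))
    · exact (hinf n).1
  have hPcont : Continuous (fun v : E => v - P v) := by
    apply continuous_id.sub
    exact continuous_finset_sum _ fun i _ => ((f i).continuous).smul continuous_const
  have hPmem : ∀ v ∈ (Submodule.span ℝ (Set.range x)).topologicalClosure,
      v - P v ∈ Esub n := by
    have hstep : ∀ v ∈ Submodule.span ℝ (Set.range x), v - P v ∈ S₂ := by
      intro v hv
      induction hv using Submodule.span_induction with
      | mem v hv =>
        obtain ⟨j, rfl⟩ := hv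
        have hP : P (x j) = if j ∈ Finset.range n then x j else 0 := by
          simp only [hPdef]
          rw [Finset.sum_congr rfl fun i _ => by
            rw [hf i j, ite_smul, one_smul, zero_smul]]
          exact Finset.sum_ite_eq' (Finset.range n) j (fun i => x i)
        by_cases hj : j < n
        · rw [hP, if_pos (Finset.mem_range.2 hj), sub_self]
          exact S₂.zero_mem
        · rw [hP, if_neg (fun h => hj (Finset.mem_range.1 h)), sub_zero]
          apply Submodule.subset_span
          have hjj : n + (j - n) = j := by omega
          exact ⟨j - n, by simp only [hjj]⟩
      | zero =>
        have : P 0 = 0 := by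
          simp only [hPdef]
          simp
        rw [this, sub_zero]
        exact S₂.zero_mem
      | add u v hu hv hu' hv' =>
        have : (u + v) - P (u + v) = (u - P u) + (v - P v) := by
          simp only [hPdef]
          simp only [map_add, add_smul, Finset.sum_add_distrib]
          abel
        rw [this]
        exact S₂.add_mem hu' hv'
      | smul c v hv hv' =>
        have : (c • v) - P (c • v) = c • (v - P v) := by
          simp only [hPdef]
          simp only [map_smul, smul_eq_mul, mul_smul, ← Finset.smul_sum, smul_sub]
        rw [this]
        exact S₂.smul_mem c hv'
    intro v hv
    apply hS2le
    have hclosed : IsClosed ((fun v : E => v - P v) ⁻¹' (S₂.topologicalClosure : Set E)) :=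
      (S₂.isClosed_topologicalClosure).preimage hPcont
    have hsubset : ((Submodule.span ℝ (Set.range x) : Submodule ℝ E) : Set E) ⊆
        (fun v : E => v - P v) ⁻¹' (S₂.topologicalClosure : Set E) :=
      fun u hu => S₂.le_topologicalClosure (hstep u hu)
    have hcl := closure_minimal hsubset hclosed
    have hv' : v ∈ closure ((Submodule.span ℝ (Set.range x) : Submodule ℝ E) : Set E) := by
      rwa [← Submodule.topologicalClosure_coe]
    exact hcl hv'
  have hPle : ∀ v : E, ‖P v‖ ≤ ∑ i ∈ Finset.range n, |f i v| * ‖x i‖ := by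
    intro v
    refine (norm_sum_le _ _).trans (Finset.sum_le_sum fun i _ => ?_)
    rw [norm_smul, Real.norm_eq_abs]
  -- constants
  set κ := (1 + C^2 * Ku) / (2 * δ) with hκdef
  have hκ0 : 0 < κ := div_pos (by nlinarith) (by linarith)
  set εP := 1 / (4 * κ) with hεPdef
  have hεP0 : 0 < εP := by rw [hεPdef]; positivity
  set Sx := ∑ i ∈ Finset.range n, ‖x i‖ with hSxdef
  have hSx0 : 0 ≤ Sx := Finset.sum_nonneg fun i _ => norm_nonneg _
  set c0 := εP / (2 * (Sx + 1)) with hc0def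
  have hc00 : 0 < c0 := div_pos hεP0 (by linarith)
  -- Bolzano-Weierstrass extraction on the first n coordinates
  set F : ℕ → (Fin n → ℝ) := fun k i => f i (y k) with hFdef
  set R := (∑ i : Fin n, ‖f (i:ℕ)‖) * (C * ‖y 0‖) with hRdef
  have hCy0 : 0 ≤ C * ‖y 0‖ := mul_nonneg hC0.le (norm_nonneg _)
  have hFbdd : ∀ k, F k ∈ Metric.closedBall (0 : Fin n → ℝ) R := by
    intro k
    rw [Metric.mem_closedBall, dist_zero_right]
    refine (pi_norm_le_iff_of_nonneg (by
      exact mul_nonneg (Finset.sum_nonneg fun i _ => norm_nonneg _) hCy0)).2 fun i => ?_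
    calc ‖F k i‖ = ‖f (i:ℕ) (y k)‖ := rfl
      _ ≤ ‖f (i:ℕ)‖ * ‖y k‖ := (f (i:ℕ)).le_opNorm _
      _ ≤ ‖f (i:ℕ)‖ * (C * ‖y 0‖) := mul_le_mul_of_nonneg_left (hynorm k) (norm_nonneg _)
      _ ≤ R := by
          rw [hRdef]
          exact mul_le_mul_of_nonneg_right
            (Finset.single_le_sum (f := fun i : Fin n => ‖f (i:ℕ)‖)
              (fun i _ => norm_nonneg _) (Finset.mem_univ i)) hCy0
  obtain ⟨L, -, σ, hσ, hσconv⟩ := tendsto_subseq_of_bounded Metric.isBounded_closedBall hFbdd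
  have hev : ∀ m : ℕ, ∀ᶠ k in atTop, ‖F (σ k) - L‖ ≤ c0 * (1/2)^m := by
    intro m
    have hpos : 0 < c0 * (1/2)^m := by positivity
    filter_upwards [hσconv.eventually (Metric.closedBall_mem_nhds L hpos)] with k hk
    simp only [Function.comp_apply, Metric.mem_closedBall, dist_eq_norm] at hk
    exact hk
  obtain ⟨τ, hτ, hτP⟩ := Filter.extraction_forall_of_eventually hev
  set ψ : ℕ → ℕ := fun j => σ (τ j) with hψdef
  have hψm : StrictMono ψ := fun a b h => hσ (hτ h)
  set dd : ℕ → E := fun m => y (ψ (2*m)) - y (ψ (2*m+1)) with hdddef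
  have hddlow0 : ∀ m, δ ≤ ‖dd m‖ := fun m => hlow ψ hψm m
  -- coordinate smallness of the differences
  have hfd : ∀ m : ℕ, ∀ i, i < n → |f i (dd m)| ≤ 2 * c0 * (1/2)^m := by
    intro m i hi
    have key : ∀ l : ℕ, |f i (y (ψ l)) - L ⟨i, hi⟩| ≤ c0 * (1/2)^l := by
      intro l
      have h1 := hτP l
      have h2 : |(F (ψ l) - L) ⟨i, hi⟩| ≤ ‖F (ψ l) - L‖ := by
        rw [← Real.norm_eq_abs]
        exact norm_le_pi_norm (F (ψ l) - L) ⟨i, hi⟩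
      have h3 : (F (ψ l) - L) ⟨i, hi⟩ = f i (y (ψ l)) - L ⟨i, hi⟩ := rfl
      rw [h3] at h2
      exact h2.trans h1
    have h4 : f i (dd m) = (f i (y (ψ (2*m))) - L ⟨i, hi⟩)
        - (f i (y (ψ (2*m+1))) - L ⟨i, hi⟩) := by
      rw [hdddef]
      simp only [map_sub]
      ring
    have h5 : ((1:ℝ)/2)^(2*m) ≤ (1/2)^m :=
      pow_le_pow_of_le_one (by norm_num) (by norm_num) (by omega)
    have h6 : ((1:ℝ)/2)^(2*m+1) ≤ (1/2)^m :=
      pow_le_pow_of_le_one (by norm_num) (by norm_num) (by omega)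
    calc |f i (dd m)| ≤ |f i (y (ψ (2*m))) - L ⟨i, hi⟩|
          + |f i (y (ψ (2*m+1))) - L ⟨i, hi⟩| := by rw [h4]; exact abs_sub _ _
      _ ≤ c0 * (1/2)^(2*m) + c0 * (1/2)^(2*m+1) := add_le_add (key _) (key _)
      _ ≤ 2 * c0 * (1/2)^m := by nlinarith [hc00.le]
  have hPdd : ∀ m, ‖P (dd m)‖ ≤ εP * (1/2)^m := by
    intro m
    refine (hPle _).trans ?_
    have hkey : c0 * (2*(Sx+1)) = εP := div_mul_cancel₀ _ (by linarith)
    calc ∑ i ∈ Finset.range n, |f i (dd m)| * ‖x i‖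
        ≤ ∑ i ∈ Finset.range n, (2*c0*(1/2)^m) * ‖x i‖ :=
          Finset.sum_le_sum fun i hi =>
            mul_le_mul_of_nonneg_right (hfd m i (Finset.mem_range.1 hi)) (norm_nonneg _)
      _ = (2*c0*(1/2)^m) * Sx := by rw [← Finset.mul_sum]
      _ ≤ εP * (1/2)^m := by nlinarith [pow_nonneg (by norm_num : (0:ℝ) ≤ 1/2) m, hc00.le]
  -- the perturbed sequence
  set w : ℕ → E := fun m => dd m - P (dd m) with hwdef
  have hwmem : ∀ m, w m ∈ Esub n := fun m =>
    hPmem (dd m) (Submodule.sub_mem _ (hymem _) (hymem _))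
  -- master identity
  have hident : ∀ (θ : ℕ → ℕ) (s : Finset ℕ) (a : ℕ → ℝ),
      ∑ i ∈ s, a i • dd (θ i)
        = ∑ j ∈ DiagAux.pairF s, DiagAux.bc a j • y (ψ (DiagAux.gmap θ j)) := by
    intro θ s a
    rw [DiagAux.sum_pairF (fun j => y (ψ (DiagAux.gmap θ j))) s a]
    refine Finset.sum_congr rfl fun i _ => ?_
    rw [DiagAux.gmap_even, DiagAux.gmap_odd]
  -- comparison with y-sums
  have hyθ : ∀ (θ : ℕ → ℕ), StrictMono θ → ∀ (s : Finset ℕ) (a : ℕ → ℝ),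
      (1/C) * ‖∑ j ∈ DiagAux.pairF s, DiagAux.bc a j • y j‖ ≤ ‖∑ i ∈ s, a i • dd (θ i)‖ ∧
      ‖∑ i ∈ s, a i • dd (θ i)‖ ≤ C * ‖∑ j ∈ DiagAux.pairF s, DiagAux.bc a j • y j‖ := by
    intro θ hθ s a
    have hρ : StrictMono (fun j => ψ (DiagAux.gmap θ j)) :=
      fun a b h => hψm (DiagAux.gmap_strictMono hθ h)
    have h := hsub _ hρ (DiagAux.pairF s) (DiagAux.bc a)
    rw [hident θ s a]
    simpa [Function.comp] using h
  -- dd vs dd ∘ θ comparison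
  have hddcmp : ∀ (θ : ℕ → ℕ), StrictMono θ → ∀ (s : Finset ℕ) (a : ℕ → ℝ),
      ‖∑ i ∈ s, a i • dd (θ i)‖ ≤ C^2 * ‖∑ i ∈ s, a i • dd i‖ ∧
      ‖∑ i ∈ s, a i • dd i‖ ≤ C^2 * ‖∑ i ∈ s, a i • dd (θ i)‖ := by
    intro θ hθ s a
    obtain ⟨h1, h2⟩ := hyθ θ hθ s a
    obtain ⟨h3, h4⟩ := hyθ id strictMono_id s a
    simp only [id_eq] at h3 h4
    constructor
    · calc ‖∑ i ∈ s, a i • dd (θ i)‖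
          ≤ C * ‖∑ j ∈ DiagAux.pairF s, DiagAux.bc a j • y j‖ := h2
        _ ≤ C * (C * ‖∑ i ∈ s, a i • dd i‖) := mul_le_mul_of_nonneg_left (hinv h3) hC0.le
        _ = C^2 * ‖∑ i ∈ s, a i • dd i‖ := by ring
    · calc ‖∑ i ∈ s, a i • dd i‖
          ≤ C * ‖∑ j ∈ DiagAux.pairF s, DiagAux.bc a j • y j‖ := h4
        _ ≤ C * (C * ‖∑ i ∈ s, a i • dd (θ i)‖) := mul_le_mul_of_nonneg_left (hinv h1) hC0.le
        _ = C^2 * ‖∑ i ∈ s, a i • dd (θ i)‖ := by ring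
  -- unconditionality of dd ∘ θ
  have hddu : ∀ (θ : ℕ → ℕ), StrictMono θ → ∀ (s : Finset ℕ) (a ε : ℕ → ℝ),
      (∀ i, ε i = 1 ∨ ε i = -1) →
      ‖∑ i ∈ s, (ε i * a i) • dd (θ i)‖ ≤ C^2 * Ku * ‖∑ i ∈ s, a i • dd (θ i)‖ := by
    intro θ hθ s a ε hε
    obtain ⟨h1, h2⟩ := hyθ θ hθ s (fun i => ε i * a i)
    obtain ⟨h3, h4⟩ := hyθ θ hθ s a
    have hmid : ‖∑ j ∈ DiagAux.pairF s, DiagAux.bc (fun i => ε i * a i) j • y j‖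
        ≤ Ku * ‖∑ j ∈ DiagAux.pairF s, DiagAux.bc a j • y j‖ := by
      have hh := hKu (DiagAux.pairF s) (DiagAux.bc a) (fun j => ε (j/2)) (fun j => hε _)
      rw [show (∑ j ∈ DiagAux.pairF s, DiagAux.bc (fun i => ε i * a i) j • y j)
          = ∑ j ∈ DiagAux.pairF s, (ε (j/2) * DiagAux.bc a j) • y j from
        Finset.sum_congr rfl fun j _ => by rw [DiagAux.bc_mul]]
      exact hh
    calc ‖∑ i ∈ s, (ε i * a i) • dd (θ i)‖
        ≤ C * ‖∑ j ∈ DiagAux.pairF s, DiagAux.bc (fun i => ε i * a i) j • y j‖ := h2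
      _ ≤ C * (Ku * ‖∑ j ∈ DiagAux.pairF s, DiagAux.bc a j • y j‖) :=
          mul_le_mul_of_nonneg_left hmid hC0.le
      _ ≤ C * (Ku * (C * ‖∑ i ∈ s, a i • dd (θ i)‖)) :=
          mul_le_mul_of_nonneg_left (mul_le_mul_of_nonneg_left (hinv h3) hKu0.le) hC0.le
      _ = C^2 * Ku * ‖∑ i ∈ s, a i • dd (θ i)‖ := by ring
  have hCKu : 0 ≤ C^2 * Ku := mul_nonneg (by positivity) hKu0.le
  -- coefficient bound
  have hcoef : ∀ (θ : ℕ → ℕ), StrictMono θ → ∀ (s : Finset ℕ) (a : ℕ → ℝ), ∀ j ∈ s,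
      |a j| ≤ κ * ‖∑ i ∈ s, a i • dd (θ i)‖ := by
    intro θ hθ s a j hj
    have hT : ‖∑ i ∈ s, ((if i = j then (-1:ℝ) else 1) * a i) • dd (θ i)‖
        ≤ C^2 * Ku * ‖∑ i ∈ s, a i • dd (θ i)‖ :=
      hddu θ hθ s a _ (fun i => by by_cases h : i = j <;> simp [h])
    have hdiff : (∑ i ∈ s, a i • dd (θ i))
        - ∑ i ∈ s, ((if i = j then (-1:ℝ) else 1) * a i) • dd (θ i)
        = (2 * a j) • dd (θ j) := by
      have hsingle := Finset.sum_eq_single_of_mem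
        (f := fun i => a i • dd (θ i) - ((if i = j then (-1:ℝ) else 1) * a i) • dd (θ i))
        j hj (fun i _ hne => by simp only [if_neg hne, one_mul, sub_self])
      rw [← Finset.sum_sub_distrib, hsingle]
      show a j • dd (θ j) - ((if j = j then (-1:ℝ) else 1) * a j) • dd (θ j) = _
      rw [if_pos rfl, ← sub_smul, show a j - (-1)*a j = 2*a j by ring]
    have hddlow : δ ≤ ‖dd (θ j)‖ := by
      have hρ : StrictMono (fun j => ψ (DiagAux.gmap θ j)) :=
        fun a b h => hψm (DiagAux.gmap_strictMono hθ h)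
      have hl := hlow _ hρ j
      rwa [DiagAux.gmap_even, DiagAux.gmap_odd] at hl
    have h1 : ‖(2 * a j) • dd (θ j)‖ ≤ ‖∑ i ∈ s, a i • dd (θ i)‖
        + ‖∑ i ∈ s, ((if i = j then (-1:ℝ) else 1) * a i) • dd (θ i)‖ :=
      hdiff ▸ norm_sub_le _ _
    rw [norm_smul, Real.norm_eq_abs, abs_mul, abs_two] at h1
    have h2 : 2 * |a j| * δ ≤ 2 * |a j| * ‖dd (θ j)‖ :=
      mul_le_mul_of_nonneg_left hddlow (by positivity)
    have h3 : (1 + C^2*Ku) * ‖∑ i ∈ s, a i • dd (θ i)‖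
        = ‖∑ i ∈ s, a i • dd (θ i)‖ + C^2*Ku*‖∑ i ∈ s, a i • dd (θ i)‖ := by ring
    have h4 : 2 * |a j| * δ ≤ (1 + C^2*Ku) * ‖∑ i ∈ s, a i • dd (θ i)‖ := by
      rw [h3]
      linarith [hT, h1, h2]
    rw [hκdef, div_mul_eq_mul_div, le_div_iff₀ (by linarith : (0:ℝ) < 2*δ)]
    linarith [h4]
  -- perturbation estimate
  have hpert : ∀ (θ : ℕ → ℕ), StrictMono θ → ∀ (s : Finset ℕ) (a : ℕ → ℝ),
      ‖∑ i ∈ s, a i • w (θ i) - ∑ i ∈ s, a i • dd (θ i)‖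
        ≤ (1/2) * ‖∑ i ∈ s, a i • dd (θ i)‖ := by
    intro θ hθ s a
    have hW : ∑ i ∈ s, a i • w (θ i) - ∑ i ∈ s, a i • dd (θ i)
        = -∑ i ∈ s, a i • P (dd (θ i)) := by
      rw [← Finset.sum_sub_distrib, ← Finset.sum_neg_distrib]
      refine Finset.sum_congr rfl fun i _ => ?_
      rw [← smul_sub, hwdef]
      simp only [sub_sub_cancel_left, smul_neg]
    rw [hW, norm_neg]
    have hκS : 0 ≤ κ * ‖∑ i ∈ s, a i • dd (θ i)‖ := mul_nonneg hκ0.le (norm_nonneg _)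
    calc ‖∑ i ∈ s, a i • P (dd (θ i))‖
        ≤ ∑ i ∈ s, |a i| * ‖P (dd (θ i))‖ := by
          refine (norm_sum_le _ _).trans (Finset.sum_le_sum fun i _ => ?_)
          rw [norm_smul, Real.norm_eq_abs]
      _ ≤ ∑ i ∈ s, (κ * ‖∑ i ∈ s, a i • dd (θ i)‖) * (εP * (1/2)^(θ i)) := by
          refine Finset.sum_le_sum fun i hi => ?_
          exact mul_le_mul (hcoef θ hθ s a i hi) (hPdd (θ i)) (norm_nonneg _) hκS
      _ = (κ * ‖∑ i ∈ s, a i • dd (θ i)‖ * εP) * ∑ i ∈ s, ((1:ℝ)/2)^(θ i) := by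
          rw [Finset.mul_sum]
          exact Finset.sum_congr rfl fun i _ => by ring
      _ ≤ (κ * ‖∑ i ∈ s, a i • dd (θ i)‖ * εP) * 2 :=
          mul_le_mul_of_nonneg_left (DiagAux.sum_half_le hθ s)
            (mul_nonneg hκS hεP0.le)
      _ = (1/2) * ‖∑ i ∈ s, a i • dd (θ i)‖ := by
          rw [hεPdef]
          field_simp
          ring
  have hwu : ∀ (θ : ℕ → ℕ), StrictMono θ → ∀ (s : Finset ℕ) (a : ℕ → ℝ),
      ‖∑ i ∈ s, a i • w (θ i)‖ ≤ (3/2) * ‖∑ i ∈ s, a i • dd (θ i)‖ := by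
    intro θ hθ s a
    have h := hpert θ hθ s a
    have h2 := norm_sub_norm_le (∑ i ∈ s, a i • w (θ i)) (∑ i ∈ s, a i • dd (θ i))
    linarith
  have hwl : ∀ (θ : ℕ → ℕ), StrictMono θ → ∀ (s : Finset ℕ) (a : ℕ → ℝ),
      (1/2) * ‖∑ i ∈ s, a i • dd (θ i)‖ ≤ ‖∑ i ∈ s, a i • w (θ i)‖ := by
    intro θ hθ s a
    have h := hpert θ hθ s a
    have h2 := norm_sub_norm_le (∑ i ∈ s, a i • dd (θ i)) (∑ i ∈ s, a i • w (θ i))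
    rw [norm_sub_rev] at h2
    linarith
  -- w is nonzero
  have hw0 : ∀ m, w m ≠ 0 := by
    intro m h
    have h1 := hwl id strictMono_id {m} (fun _ => 1)
    simp only [id_eq, Finset.sum_singleton, one_smul] at h1
    rw [h, norm_zero] at h1
    nlinarith [hddlow0 m, hδ0]
  -- now contradict hno n
  apply hno n
  refine ⟨w, hwmem, ⟨⟨⟨hw0, 3 * C^2 * Ky, by nlinarith, ?_⟩, 3 * C^2 * Ku, by nlinarith, ?_⟩, ?_⟩⟩
  · -- basic sequence bound
    intro a m m' hmm'
    have h1 := hwu id strictMono_id (Finset.range m) a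
    have h2 := hwl id strictMono_id (Finset.range m') a
    simp only [id_eq] at h1 h2
    have h3 : ‖∑ i ∈ Finset.range m, a i • dd i‖
        ≤ C^2 * Ky * ‖∑ i ∈ Finset.range m', a i • dd i‖ := by
      obtain ⟨hA1, hA2⟩ := hyθ id strictMono_id (Finset.range m) a
      obtain ⟨hB1, hB2⟩ := hyθ id strictMono_id (Finset.range m') a
      simp only [id_eq] at hA1 hA2 hB1 hB2
      rw [DiagAux.pairF_range] at hA2
      rw [DiagAux.pairF_range] at hB1
      have hmidd : ‖∑ j ∈ Finset.range (2*m), DiagAux.bc a j • y j‖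
          ≤ Ky * ‖∑ j ∈ Finset.range (2*m'), DiagAux.bc a j • y j‖ :=
        hKy _ _ _ (by omega)
      calc ‖∑ i ∈ Finset.range m, a i • dd i‖
          ≤ C * ‖∑ j ∈ Finset.range (2*m), DiagAux.bc a j • y j‖ := hA2
        _ ≤ C * (Ky * ‖∑ j ∈ Finset.range (2*m'), DiagAux.bc a j • y j‖) :=
            mul_le_mul_of_nonneg_left hmidd hC0.le
        _ ≤ C * (Ky * (C * ‖∑ i ∈ Finset.range m', a i • dd i‖)) :=
            mul_le_mul_of_nonneg_left
              (mul_le_mul_of_nonneg_left (hinv hB1) (by linarith)) hC0.le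
        _ = C^2 * Ky * ‖∑ i ∈ Finset.range m', a i • dd i‖ := by ring
    have hCKy : (0:ℝ) ≤ C^2 * Ky := mul_nonneg (by positivity) (by linarith)
    calc ‖∑ i ∈ Finset.range m, a i • w i‖
        ≤ (3/2) * ‖∑ i ∈ Finset.range m, a i • dd i‖ := h1
      _ ≤ (3/2) * (C^2 * Ky * ‖∑ i ∈ Finset.range m', a i • dd i‖) :=
          mul_le_mul_of_nonneg_left h3 (by norm_num)
      _ ≤ (3/2) * (C^2 * Ky * (2 * ‖∑ i ∈ Finset.range m', a i • w i‖)) := by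
          have : ‖∑ i ∈ Finset.range m', a i • dd i‖
              ≤ 2 * ‖∑ i ∈ Finset.range m', a i • w i‖ := by linarith
          exact mul_le_mul_of_nonneg_left (mul_le_mul_of_nonneg_left this hCKy) (by norm_num)
      _ = 3 * C^2 * Ky * ‖∑ i ∈ Finset.range m', a i • w i‖ := by ring
  · -- unconditionality
    intro s a ε hε
    have h1 := hwu id strictMono_id s (fun i => ε i * a i)
    have h2 := hddu id strictMono_id s a ε hε
    have h3 := hwl id strictMono_id s a
    simp only [id_eq] at h1 h2 h3
    calc ‖∑ i ∈ s, (ε i * a i) • w i‖ ≤ (3/2) * ‖∑ i ∈ s, (ε i * a i) • dd i‖ := h1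
      _ ≤ (3/2) * (C^2 * Ku * ‖∑ i ∈ s, a i • dd i‖) :=
          mul_le_mul_of_nonneg_left h2 (by norm_num)
      _ ≤ (3/2) * (C^2 * Ku * (2 * ‖∑ i ∈ s, a i • w i‖)) := by
          have : ‖∑ i ∈ s, a i • dd i‖ ≤ 2 * ‖∑ i ∈ s, a i • w i‖ := by linarith
          exact mul_le_mul_of_nonneg_left (mul_le_mul_of_nonneg_left this hCKu) (by norm_num)
      _ = 3 * C^2 * Ku * ‖∑ i ∈ s, a i • w i‖ := by ring
  · -- subsymmetry with constant n
    intro θ hθ s a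
    simp only [Function.comp_apply]
    have h1 := hwu θ hθ s a
    have h2 := hwl θ hθ s a
    have h3 := hwu id strictMono_id s a
    have h4 := hwl id strictMono_id s a
    simp only [id_eq] at h3 h4
    obtain ⟨hc1, hc2⟩ := hddcmp θ hθ s a
    constructor
    · -- (1/n) * ‖∑ a w‖ ≤ ‖∑ a (w ∘ θ)‖
      have hbig : ‖∑ i ∈ s, a i • w i‖ ≤ (n:ℝ) * ‖∑ i ∈ s, a i • w (θ i)‖ := by
        calc ‖∑ i ∈ s, a i • w i‖ ≤ (3/2) * ‖∑ i ∈ s, a i • dd i‖ := h3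
          _ ≤ (3/2) * (C^2 * ‖∑ i ∈ s, a i • dd (θ i)‖) :=
              mul_le_mul_of_nonneg_left hc2 (by norm_num)
          _ ≤ (3/2) * (C^2 * (2 * ‖∑ i ∈ s, a i • w (θ i)‖)) := by
              have : ‖∑ i ∈ s, a i • dd (θ i)‖ ≤ 2 * ‖∑ i ∈ s, a i • w (θ i)‖ := by linarith
              exact mul_le_mul_of_nonneg_left
                (mul_le_mul_of_nonneg_left this (by positivity)) (by norm_num)
          _ = 3 * C^2 * ‖∑ i ∈ s, a i • w (θ i)‖ := by ring
          _ ≤ (n:ℝ) * ‖∑ i ∈ s, a i • w (θ i)‖ :=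
              mul_le_mul_of_nonneg_right hn3 (norm_nonneg _)
      have h5 := mul_le_mul_of_nonneg_left hbig (by positivity : (0:ℝ) ≤ 1/(n:ℝ))
      rwa [← mul_assoc, one_div_mul_cancel (ne_of_gt hn0), one_mul] at h5
    · calc ‖∑ i ∈ s, a i • w (θ i)‖ ≤ (3/2) * ‖∑ i ∈ s, a i • dd (θ i)‖ := h1
        _ ≤ (3/2) * (C^2 * ‖∑ i ∈ s, a i • dd i‖) :=
            mul_le_mul_of_nonneg_left hc1 (by norm_num)
        _ ≤ (3/2) * (C^2 * (2 * ‖∑ i ∈ s, a i • w i‖)) := by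
            have : ‖∑ i ∈ s, a i • dd i‖ ≤ 2 * ‖∑ i ∈ s, a i • w i‖ := by linarith
            exact mul_le_mul_of_nonneg_left
              (mul_le_mul_of_nonneg_left this (by positivity)) (by norm_num)
        _ = 3 * C^2 * ‖∑ i ∈ s, a i • w i‖ := by ring
        _ ≤ (n:ℝ) * ‖∑ i ∈ s, a i • w i‖ :=
            mul_le_mul_of_nonneg_right hn3 (norm_nonneg _)
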